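/- Let X be a matching such that X is individually rational and, for every institution i, the choice rule C_i is path independent and C_i(D_i(X)) = X_i, where D_i(X) is the demand of institution i at X. Then X is stable with respect to the profile (C_i): X is individually rational, C_i(X_i) = X_i for every institution i, and there is no contract x ∈ 𝒳 with x ≻_{α(x)} X_{α(x)} and x ∈ C_{ι(x)}(X_{ι(x)} ∪ {x}). -/

import Mathlib

/- Matching with contracts setup: `A` is the set of agents, `I` the set of
institutions, and `X` the finite set of contracts; `ag x` and `inst x` are the
agent and the institution of contract `x`.  The strict preference of agent
`ag x` is encoded by `pr : X → Option X → Prop`, where `pr x o` means that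
agent `ag x` strictly prefers the contract `x` to the outcome `o` (`o` is
`some y` for a contract `y` of the same agent, or `none` for the null
contract `∅`).  A matching is a finite set of contracts `Xm` with at most one
contract per agent; `asg a` is the contract of agent `a` in `Xm` (or `none`),
so that `X_{α(x)} = asg (ag x)`. -/

open Classical in
/-- The set `𝒳_i` of all contracts of institution `i`. -/
noncomputable def contractsOf {I X : Type*} [Fintype X] (inst : X → I)
    (i : I) : Finset X :=
  Finset.univ.filter fun x => inst x = i

open Classical in
/-- `X_i`: the set of contracts of institution `i` in the matching `Xm`. -/
noncomputable def matchedAt {I X : Type*} (inst : X → I) (Xm : Finset X)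
    (i : I) : Finset X :=
  Xm.filter fun x => inst x = i

open Classical in
/-- The demand `D_i(X)` of institution `i` at the matching with assignment
`asg`: the contracts of `i` that their agents weakly prefer to their
assignment. -/
noncomputable def demandAt {A I X : Type*} [Fintype X] (ag : X → A)
    (inst : X → I) (pr : X → Option X → Prop) (asg : A → Option X)
    (i : I) : Finset X :=
  Finset.univ.filter fun x =>
    inst x = i ∧ (pr x (asg (ag x)) ∨ asg (ag x) = some x)

/-- If a matching `Xm` is individually rational and, for every institution
`i`, the choice rule `C i` is path independent (on subsets of `𝒳_i`) and
`C i (D_i(X)) = X_i`, then `Xm` is stable with respect to `(C i)`: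
it is individually rational, institution rational (`C i X_i = X_i` for every
`i`), and admits no blocking contract. -/
theorem stable_of_pathIndependent_choice_of_demand
    {A I X : Type*} [Fintype X] [DecidableEq X]
    (ag : X → A) (inst : X → I)
    (pr : X → Option X → Prop)
    -- `pr` is a strict preference: no contract is preferred to itself
    (hIrr : ∀ x : X, ¬ pr x (some x))
    (Xm : Finset X)
    -- `Xm` is a matching: at most one contract per agent
    (hmatch : ∀ x ∈ Xm, ∀ y ∈ Xm, ag x = ag y → x = y)
    -- `asg a` is the contract of agent `a` in `Xm`, or `none`
    (asg : A → Option X)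
    (hasg : ∀ (a : A) (x : X), asg a = some x ↔ x ∈ Xm ∧ ag x = a)
    -- choice rules of the institutions
    (C : I → Finset X → Finset X)
    (hCsub : ∀ i : I, ∀ B ⊆ contractsOf inst i, C i B ⊆ B)
    -- path independence
    (hPI : ∀ i : I, ∀ B ⊆ contractsOf inst i, ∀ B' ⊆ contractsOf inst i,
      C i (B ∪ B') = C i (C i B ∪ B'))
    -- individual rationality of `Xm`
    (hIR : ∀ x ∈ Xm, pr x none)
    -- `C_i (D_i(X)) = X_i` for every institution `i`
    (hfix : ∀ i : I, C i (demandAt ag inst pr asg i) = matchedAt inst Xm i) :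
    -- stability of `Xm` with respect to `(C i)`:
    (∀ x ∈ Xm, pr x none) ∧
    (∀ i : I, C i (matchedAt inst Xm i) = matchedAt inst Xm i) ∧
    ¬ ∃ x : X, pr x (asg (ag x)) ∧
        x ∈ C (inst x) (insert x (matchedAt inst Xm (inst x))) := by
  classical
  -- basic subset facts
  have hMsub : ∀ i, matchedAt inst Xm i ⊆ contractsOf inst i := by
    intro i x hx
    simp only [matchedAt, Finset.mem_filter] at hx
    simp [contractsOf, hx.2]
  have hDsub : ∀ i, demandAt ag inst pr asg i ⊆ contractsOf inst i := by
    intro i x hx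
    simp only [demandAt, Finset.mem_filter] at hx
    simp [contractsOf, hx.2.1]
  have hMD : ∀ i, matchedAt inst Xm i ⊆ demandAt ag inst pr asg i := by
    intro i x hx
    simp only [matchedAt, Finset.mem_filter] at hx
    have : asg (ag x) = some x := (hasg (ag x) x).2 ⟨hx.1, rfl⟩
    simp [demandAt, hx.2, this]
  -- C i M = M
  have hCM : ∀ i, C i (matchedAt inst Xm i) = matchedAt inst Xm i := by
    intro i
    have h1 := hPI i _ (hDsub i) _ (hMsub i)
    rw [hfix i, Finset.union_eq_left.2 (hMD i), Finset.union_self] at h1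
    rw [← h1, hfix i]
  refine ⟨hIR, hCM, ?_⟩
  rintro ⟨x, hpr, hxC⟩
  set i := inst x with hi
  have hxD : x ∈ demandAt ag inst pr asg i := by
    simp [demandAt, hpr, hi]
  have hIsub : insert x (matchedAt inst Xm i) ⊆ contractsOf inst i := by
    intro y hy
    rcases Finset.mem_insert.1 hy with rfl | hy
    · simp [contractsOf, hi]
    · exact hMsub i hy
  have hID : insert x (matchedAt inst Xm i) ⊆ demandAt ag inst pr asg i :=
    Finset.insert_subset hxD (hMD i)
  have h2 := hPI i _ (hDsub i) _ hIsub
  rw [Finset.union_eq_left.2 hID, hfix i,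
    Finset.union_eq_right.2 (Finset.subset_insert _ _)] at h2
  -- so C i D = C i (insert x M) ∋ x, hence x ∈ M
  have hxM : x ∈ matchedAt inst Xm i := by
    rw [h2]; exact hxC
  have hxXm : x ∈ Xm := (Finset.mem_filter.1 hxM).1
  have : asg (ag x) = some x := (hasg (ag x) x).2 ⟨hxXm, rfl⟩
  rw [this] at hpr
  exact hIrr x hpr
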